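/- arXiv:2403.15057 — 2 statements merged into one kernel-verified Lean document; each statement's English description precedes it below -/
import Mathlib

section
/- Let r > 0, let σ be a finite Borel measure on ℝ² whose support is contained in the closed ball of radius r centered at 0, and let μ ∈ L¹(σ) satisfy ∫ μ dσ = 0. Then there exists r₁ > r such that for every x ∈ ℝ² with ‖x‖ ≥ r₁ one has |v[μ](x)| ≤ (3/(4π)) · (r/‖x‖) · ∫ |μ| dσ. -/
open MeasureTheory Metric Filter Topology

noncomputable section

/-- The `(n-1)`-dimensional Hausdorff measure of the unit sphere of `ℝⁿ`. -/
def sphereArea (n : ℕ) : ℝ :=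
  (MeasureTheory.Measure.hausdorffMeasure ((n : ℝ) - 1)
    (Metric.sphere (0 : EuclideanSpace ℝ (Fin n)) 1)).toReal

/-- The fundamental solution of the Laplace operator in `ℝⁿ`. -/
def fundSol (n : ℕ) (ξ : EuclideanSpace ℝ (Fin n)) : ℝ :=
  if n = 2 then (1 / (2 * Real.pi)) * Real.log ‖ξ‖
  else ‖ξ‖ ^ ((2 : ℝ) - n) / (((2 : ℝ) - n) * sphereArea n)

/-- The support of a measure: the smallest closed set whose complement is null. -/
def measSupport {E : Type*} [TopologicalSpace E] [MeasurableSpace E]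
    (σ : MeasureTheory.Measure E) : Set E :=
  ⋂₀ {C : Set E | IsClosed C ∧ σ Cᶜ = 0}

/-- Partial derivative in the `i`-th coordinate direction. -/
def pderivE {n : ℕ} (i : Fin n) (f : EuclideanSpace ℝ (Fin n) → ℝ) :
    EuclideanSpace ℝ (Fin n) → ℝ :=
  fun x => fderiv ℝ f x (EuclideanSpace.single i 1)

/-- Iterated partial derivative `D^η` associated with the multi-index `η`. -/
def mderiv {n : ℕ} (η : Fin n → ℕ) (f : EuclideanSpace ℝ (Fin n) → ℝ) :
    EuclideanSpace ℝ (Fin n) → ℝ :=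
  ((List.ofFn fun i : Fin n => (pderivE i)^[η i]).foldr (fun g h => g ∘ h) id) f

/-- `f` is harmonic on `U`: twice continuously differentiable on `U` with vanishing
Laplacian on `U`. -/
def HarmonicOnSet {n : ℕ} (f : EuclideanSpace ℝ (Fin n) → ℝ)
    (U : Set (EuclideanSpace ℝ (Fin n))) : Prop :=
  ContDiffOn ℝ 2 f U ∧ ∀ x ∈ U, (∑ i : Fin n, pderivE i (pderivE i f) x) = 0

lemma measSupport_compl_null {E : Type*} [TopologicalSpace E] [MeasurableSpace E]
    [SecondCountableTopology E] (σ : MeasureTheory.Measure E) :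
    σ (measSupport σ)ᶜ = 0 := by
  have hL : IsLindelof (measSupport σ)ᶜ :=
    (HereditarilyLindelofSpace.isHereditarilyLindelof_univ).isLindelof_subset (Set.subset_univ _)
  have hcov : (measSupport σ)ᶜ ⊆ ⋃ C ∈ {C : Set E | IsClosed C ∧ σ Cᶜ = 0}, Cᶜ := by
    intro x hx
    simp only [measSupport, Set.mem_compl_iff, Set.mem_sInter, not_forall] at hx
    obtain ⟨C, hC, hxC⟩ := hx
    exact Set.mem_biUnion hC hxC
  obtain ⟨b', hb'sub, hb'c, hb'cov⟩ := hL.elim_countable_subcover_image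
    (fun C hC => hC.1.isOpen_compl) hcov
  refine measure_mono_null hb'cov ?_
  exact (measure_biUnion_null_iff hb'c).2 fun C hC => (hb'sub hC).2

lemma key_log_bound {r a b : ℝ} (hr : 0 < r) (hb : 3 * r ≤ b)
    (h1 : b - r ≤ a) (h2 : a ≤ b + r) :
    |Real.log a - Real.log b| ≤ (3 / 2) * (r / b) := by
  have hb0 : 0 < b := by linarith
  have ha0 : 0 < a := by linarith
  rw [abs_sub_le_iff]
  constructor
  · have := Real.log_le_sub_one_of_pos (by positivity : 0 < a / b)
    rw [Real.log_div (ne_of_gt ha0) (ne_of_gt hb0)] at this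
    have : Real.log a - Real.log b ≤ a / b - 1 := this
    have hab : a / b - 1 ≤ r / b := by
      rw [div_sub' (ne_of_gt hb0), div_le_div_iff₀ hb0 hb0]
      nlinarith
    nlinarith [div_nonneg hr.le hb0.le]
  · have := Real.log_le_sub_one_of_pos (by positivity : 0 < b / a)
    rw [Real.log_div (ne_of_gt hb0) (ne_of_gt ha0)] at this
    have h3 : Real.log b - Real.log a ≤ b / a - 1 := this
    have hab : b / a - 1 ≤ (3 / 2) * (r / b) := by
      have h4 : b / a - 1 = (b - a) / a := by field_simp
      have h5 : (3 / 2 : ℝ) * (r / b) = (3 * r) / (2 * b) := by ring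
      rw [h4, h5, div_le_div_iff₀ ha0 (by positivity)]
      nlinarith
    linarith


/-- decay estimate for the planar single layer potential of a density with
vanishing mean. -/
theorem singleLayer_two_dim_decay_estimate
    (r : ℝ) (hr : 0 < r)
    (σ : Measure (EuclideanSpace ℝ (Fin 2))) [IsFiniteMeasure σ]
    (hsupp : measSupport σ ⊆ Metric.closedBall 0 r)
    (μ : EuclideanSpace ℝ (Fin 2) → ℝ) (hμ : Integrable μ σ)
    (hmean : (∫ y, μ y ∂σ) = 0) :
    ∃ r₁ : ℝ, r < r₁ ∧ ∀ x : EuclideanSpace ℝ (Fin 2), r₁ ≤ ‖x‖ →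
      |∫ y, fundSol 2 (x - y) * μ y ∂σ| ≤
        (3 / (4 * Real.pi)) * (r / ‖x‖) * ∫ y, |μ y| ∂σ := by
  refine ⟨3 * r, by linarith, fun x hx => ?_⟩
  have hx0 : (0 : ℝ) < ‖x‖ := by linarith
  have hae : ∀ᵐ y ∂σ, ‖y‖ ≤ r := by
    have h0 : σ (Metric.closedBall (0 : EuclideanSpace ℝ (Fin 2)) r)ᶜ = 0 :=
      measure_mono_null (Set.compl_subset_compl.2 hsupp) (measSupport_compl_null σ)
    have : ∀ᵐ y ∂σ, y ∈ Metric.closedBall (0 : EuclideanSpace ℝ (Fin 2)) r :=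
      mem_ae_iff.2 h0
    filter_upwards [this] with y hy
    simpa [Metric.mem_closedBall, dist_zero_right] using hy
  set b := ‖x‖ with hbdef
  set h : EuclideanSpace ℝ (Fin 2) → ℝ :=
    fun y => (Real.log ‖x - y‖ - Real.log b) * μ y with hh
  have hbound : ∀ᵐ y ∂σ, ‖h y‖ ≤ (3 / 2) * (r / b) * |μ y| := by
    filter_upwards [hae] with y hy
    have h1 : b - r ≤ ‖x - y‖ := by
      have := norm_sub_norm_le x y; linarith
    have h2 : ‖x - y‖ ≤ b + r := by
      have := norm_sub_le x y; linarith
    calc ‖h y‖ = |Real.log ‖x - y‖ - Real.log b| * |μ y| := by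
          rw [hh]; simp [abs_mul, Real.norm_eq_abs]
      _ ≤ (3 / 2) * (r / b) * |μ y| :=
          mul_le_mul_of_nonneg_right (key_log_bound hr hx h1 h2) (abs_nonneg _)
  have hmeas : AEStronglyMeasurable h σ := by
    refine AEStronglyMeasurable.mul ?_ hμ.1
    refine Measurable.aestronglyMeasurable ?_
    exact (Real.measurable_log.comp (continuous_const.sub continuous_id).norm.measurable).sub
      measurable_const
  have hint : Integrable h σ := by
    refine Integrable.mono' ((hμ.abs.const_mul ((3 / 2) * (r / b)))) hmeas ?_
    filter_upwards [hbound] with y hy using hy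
  have hint2 : Integrable (fun y => Real.log b * μ y) σ := hμ.const_mul _
  have hsplit : (∫ y, fundSol 2 (x - y) * μ y ∂σ) =
      (1 / (2 * Real.pi)) * ∫ y, h y ∂σ := by
    have : ∀ y, fundSol 2 (x - y) * μ y =
        (1 / (2 * Real.pi)) * (h y + Real.log b * μ y) := by
      intro y; simp only [fundSol, if_true, eq_self_iff_true, hh, ite_true]; ring
    rw [show (fun y => fundSol 2 (x - y) * μ y) = fun y =>
        (1 / (2 * Real.pi)) * (h y + Real.log b * μ y) from funext this]
    rw [integral_const_mul, integral_add hint hint2, integral_const_mul, hmean]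
    ring
  rw [hsplit, abs_mul]
  have hpi : (0 : ℝ) < Real.pi := Real.pi_pos
  have habs : |∫ y, h y ∂σ| ≤ ∫ y, |h y| ∂σ := by
    simpa [Real.norm_eq_abs] using norm_integral_le_integral_norm (μ := σ) h
  have hIabs : (∫ y, |h y| ∂σ) ≤ (3 / 2) * (r / b) * ∫ y, |μ y| ∂σ := by
    rw [← integral_const_mul]
    refine integral_mono_ae hint.abs ((hμ.abs.const_mul _)) ?_
    filter_upwards [hbound] with y hy
    simpa [Real.norm_eq_abs] using hy
  have h1 : |1 / (2 * Real.pi)| = 1 / (2 * Real.pi) := abs_of_pos (by positivity)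
  rw [h1]
  calc (1 / (2 * Real.pi)) * |∫ y, h y ∂σ|
      ≤ (1 / (2 * Real.pi)) * ((3 / 2) * (r / b) * ∫ y, |μ y| ∂σ) := by
        apply mul_le_mul_of_nonneg_left (habs.trans hIabs) (by positivity)
    _ = (3 / (4 * Real.pi)) * (r / b) * ∫ y, |μ y| ∂σ := by ring
end
end

section
/- Let n ≥ 2 be an integer. There exists ς ∈ (0,∞) such that for every multi-index η ∈ ℕⁿ with η ≠ 0, sup_{ξ ∈ ℝⁿ∖{0}} ‖ξ‖^{|η| + n − 2} · |D^η S_n(ξ)| ≤ ς^{|η|} · |η|!. -/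
open MeasureTheory Metric Filter Topology

noncomputable section

namespace FSAux

abbrev Esp (n : ℕ) := EuclideanSpace ℝ (Fin n)

def monoP {n : ℕ} (l : List (Fin n)) (x : Esp n) : ℝ := (l.map fun i => x i).prod

def nuP {n : ℕ} (e : ℤ) (x : Esp n) : ℝ := ‖x‖ ^ e

def tvalP {n : ℕ} (c : ℝ) (l : List (Fin n)) (e : ℤ) (x : Esp n) : ℝ :=
  c * monoP l x * nuP e x

def dsumP {n : ℕ} (j : Fin n) : List (Fin n) → Esp n → ℝ
  | [] => fun _ => 0
  | i :: l => fun x => (if i = j then monoP l x else 0) + x i * dsumP j l x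

lemma monoP_nil {n : ℕ} (x : Esp n) : monoP [] x = 1 := rfl

lemma monoP_cons {n : ℕ} (i : Fin n) (l : List (Fin n)) (x : Esp n) :
    monoP (i :: l) x = x i * monoP l x := by simp [monoP]

lemma monoP_append {n : ℕ} (l₁ l₂ : List (Fin n)) (x : Esp n) :
    monoP (l₁ ++ l₂) x = monoP l₁ x * monoP l₂ x := by simp [monoP]

lemma abs_coord_le {n : ℕ} (x : Esp n) (i : Fin n) : |x i| ≤ ‖x‖ := by
  have h : ‖x‖ = Real.sqrt (∑ j, ‖x j‖ ^ 2) := by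
    simpa using EuclideanSpace.norm_eq x
  rw [h]
  calc |x i| = Real.sqrt (‖x i‖ ^ 2) := by
        rw [Real.sqrt_sq_eq_abs]; simp [Real.norm_eq_abs, abs_abs]
    _ ≤ Real.sqrt (∑ j, ‖x j‖ ^ 2) := by
        apply Real.sqrt_le_sqrt
        exact Finset.single_le_sum (f := fun j => ‖x j‖ ^ 2)
          (fun _ _ => sq_nonneg _) (Finset.mem_univ i)

lemma abs_monoP_le {n : ℕ} (l : List (Fin n)) (x : Esp n) :
    |monoP l x| ≤ ‖x‖ ^ l.length := by
  induction l with
  | nil => simp [monoP_nil]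
  | cons i l ih =>
    rw [monoP_cons, List.length_cons, abs_mul, pow_succ']
    exact mul_le_mul (abs_coord_le x i) ih (abs_nonneg _) (norm_nonneg _)

inductive Rep (n k : ℕ) : (Esp n → ℝ) → ℝ → Prop where
  | term (c : ℝ) (l : List (Fin n)) (e : ℤ)
      (h₁ : (l.length : ℤ) + e = 2 - (n : ℤ) - k) (h₂ : (l.length : ℤ) ≤ k)
      (g : Esp n → ℝ) (hg : ∀ x : Esp n, x ≠ 0 → g x = tvalP c l e x) : Rep n k g |c|
  | add {g h : Esp n → ℝ} {B C : ℝ} : Rep n k g B → Rep n k h C →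
      Rep n k (fun x => g x + h x) (B + C)
  | up {g : Esp n → ℝ} {B B' : ℝ} : Rep n k g B → B ≤ B' → Rep n k g B'
  | congr {g h : Esp n → ℝ} {B : ℝ} : Rep n k g B →
      (∀ x : Esp n, x ≠ 0 → g x = h x) → Rep n k h B

lemma Rep.bound {n k : ℕ} {g : Esp n → ℝ} {B : ℝ} (h : Rep n k g B) :
    ∀ x : Esp n, x ≠ 0 → |g x| ≤ B * ‖x‖ ^ (2 - (n : ℤ) - k) := by
  induction h with
  | term c l e h₁ h₂ g hg =>
    intro x hx
    have hxn : (0:ℝ) < ‖x‖ := norm_pos_iff.2 hx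
    rw [hg x hx]
    have h3 : |tvalP c l e x| = |c| * |monoP l x| * ‖x‖ ^ e := by
      rw [tvalP, abs_mul, abs_mul]
      have : |nuP e x| = ‖x‖ ^ e := abs_of_nonneg (zpow_nonneg (norm_nonneg x) e)
      rw [this]
    rw [h3]
    calc |c| * |monoP l x| * ‖x‖ ^ e ≤ |c| * ‖x‖ ^ l.length * ‖x‖ ^ e := by
          apply mul_le_mul_of_nonneg_right _ (zpow_nonneg (norm_nonneg x) e)
          exact mul_le_mul_of_nonneg_left (abs_monoP_le l x) (abs_nonneg c)
      _ = |c| * ‖x‖ ^ ((l.length : ℤ) + e) := by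
          rw [zpow_add₀ hxn.ne', ← zpow_natCast (‖x‖) l.length, mul_assoc]
      _ = |c| * ‖x‖ ^ (2 - (n : ℤ) - k) := by rw [h₁]
  | add hg hh ihg ihh =>
    intro x hx
    refine (abs_add_le _ _).trans ?_
    rw [add_mul]
    exact add_le_add (ihg x hx) (ihh x hx)
  | up hgB hBB ih =>
    intro x hx
    exact (ih x hx).trans
      (mul_le_mul_of_nonneg_right hBB (zpow_nonneg (norm_nonneg x) _))
  | congr hrep heq ih =>
    intro x hx
    rw [← heq x hx]; exact ih x hx

lemma hasFDeriv_monoP {n : ℕ} (l : List (Fin n)) (x : Esp n) :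
    ∃ φ : Esp n →L[ℝ] ℝ, HasFDerivAt (monoP l) φ x ∧
      ∀ j, φ (EuclideanSpace.single j 1) = dsumP j l x := by
  induction l with
  | nil =>
    refine ⟨0, ?_, ?_⟩
    · have h := hasFDerivAt_const (𝕜 := ℝ) (1:ℝ) x
      convert h using 1
      exact funext fun y => monoP_nil y
    · intro j; simp [dsumP]
  | cons i l ih =>
    obtain ⟨φ, hφ, hval⟩ := ih
    have hfe : ⇑(innerSL ℝ (EuclideanSpace.single i (1:ℝ))) = fun y : Esp n => y i := by
      funext y
      simp [EuclideanSpace.inner_single_left (𝕜 := ℝ) i 1 y]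
    have h1 : HasFDerivAt (fun y : Esp n => y i)
        (innerSL ℝ (EuclideanSpace.single i (1:ℝ))) x := by
      have := (innerSL ℝ (EuclideanSpace.single i (1:ℝ))).hasFDerivAt (x := x)
      rwa [hfe] at this
    have h2 := h1.mul hφ
    refine ⟨x i • φ + monoP l x • (innerSL ℝ (EuclideanSpace.single i (1:ℝ))), ?_, ?_⟩
    · have hm : monoP (i :: l) = fun y : Esp n => y i * monoP l y :=
        funext fun y => monoP_cons i l y
      rw [hm]
      exact h2
    · intro j
      simp only [ContinuousLinearMap.add_apply, ContinuousLinearMap.coe_smul',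
        Pi.smul_apply, smul_eq_mul, hval j]
      have hproj : (innerSL ℝ (EuclideanSpace.single i (1:ℝ))) (EuclideanSpace.single j 1)
          = if i = j then (1:ℝ) else 0 := by
        rw [hfe]
        simp [EuclideanSpace.single_apply]
      rw [hproj]
      simp only [dsumP]
      rcases eq_or_ne i j with hij | hij
      · subst hij; simp; ring
      · simp [hij]

lemma hasFDeriv_norm {n : ℕ} (x : Esp n) (hx : x ≠ 0) :
    ∃ ψ : Esp n →L[ℝ] ℝ, HasFDerivAt (fun y : Esp n => ‖y‖) ψ x ∧
      ∀ j, ψ (EuclideanSpace.single j 1) = x j / ‖x‖ := by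
  have hin : HasFDerivAt (fun y : Esp n => (inner ℝ y y : ℝ))
      ((fderivInnerCLM ℝ ((x : Esp n), x)).comp
        ((ContinuousLinearMap.id ℝ (Esp n)).prod (ContinuousLinearMap.id ℝ (Esp n)))) x := by
    exact HasFDerivAt.inner (𝕜 := ℝ) (hasFDerivAt_id x) (hasFDerivAt_id x)
  have hs : (inner ℝ x x : ℝ) ≠ 0 := by
    rw [real_inner_self_eq_norm_mul_norm]
    have : (0:ℝ) < ‖x‖ := norm_pos_iff.2 hx
    positivity
  have hsq := HasDerivAt.comp_hasFDerivAt (f := fun y : Esp n => (inner ℝ y y : ℝ)) x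
    (Real.hasDerivAt_sqrt hs) hin
  have hfun : ((fun t : ℝ => Real.sqrt t) ∘ fun y : Esp n => (inner ℝ y y : ℝ))
      = fun y : Esp n => ‖y‖ := by
    funext y
    simp only [Function.comp_apply]
    rw [real_inner_self_eq_norm_mul_norm, Real.sqrt_mul_self (norm_nonneg y)]
  rw [hfun] at hsq
  refine ⟨_, hsq, ?_⟩
  intro j
  have hnn : (0:ℝ) < ‖x‖ := norm_pos_iff.2 hx
  have hsval : Real.sqrt (inner ℝ x x : ℝ) = ‖x‖ := by
    rw [real_inner_self_eq_norm_mul_norm, Real.sqrt_mul_self (norm_nonneg x)]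
  have hil : (inner ℝ (EuclideanSpace.single j (1:ℝ)) x : ℝ) = x j := by
    simp [EuclideanSpace.inner_single_left]
  have hir : (inner ℝ x (EuclideanSpace.single j (1:ℝ)) : ℝ) = x j := by
    simp [EuclideanSpace.inner_single_right]
  simp only [ContinuousLinearMap.coe_smul', Pi.smul_apply, ContinuousLinearMap.coe_comp',
    Function.comp_apply, ContinuousLinearMap.prod_apply, ContinuousLinearMap.coe_id', id_eq,
    fderivInnerCLM_apply, smul_eq_mul, hil, hir, hsval]
  field_simp
  ring

lemma hasFDeriv_nuP {n : ℕ} (e : ℤ) (x : Esp n) (hx : x ≠ 0) :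
    ∃ ψ : Esp n →L[ℝ] ℝ, HasFDerivAt (nuP (n := n) e) ψ x ∧
      ∀ j, ψ (EuclideanSpace.single j 1) = (e : ℝ) * (x j * nuP (e - 2) x) := by
  obtain ⟨ψ₀, hψ₀, hv⟩ := hasFDeriv_norm x hx
  have hne : ‖x‖ ≠ 0 := norm_ne_zero_iff.2 hx
  have hz := hasDerivAt_zpow e ‖x‖ (Or.inl hne)
  have hcomp := hz.comp_hasFDerivAt x hψ₀
  refine ⟨_, hcomp, ?_⟩
  intro j
  simp only [ContinuousLinearMap.coe_smul', Pi.smul_apply, smul_eq_mul, hv j]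
  have hsplit : ‖x‖ ^ (e - 1) = ‖x‖ ^ (e - 2) * ‖x‖ := by
    rw [← zpow_add_one₀ hne]; ring_nf
  rw [nuP, hsplit]
  field_simp

lemma hasFDeriv_tvalP {n : ℕ} (c : ℝ) (l : List (Fin n)) (e : ℤ) (x : Esp n) (hx : x ≠ 0) :
    ∃ χ : Esp n →L[ℝ] ℝ, HasFDerivAt (tvalP c l e) χ x ∧
      ∀ j, χ (EuclideanSpace.single j 1) =
        c * dsumP j l x * nuP e x + (c * (e : ℝ)) * monoP (j :: l) x * nuP (e - 2) x := by
  obtain ⟨φ, hφ, hφv⟩ := hasFDeriv_monoP l x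
  obtain ⟨ψ, hψ, hψv⟩ := hasFDeriv_nuP e x hx
  have h1 := (hφ.mul hψ).const_mul c
  have h2 : tvalP c l e = fun y => c * (monoP l * nuP e : Esp n → ℝ) y := by
    funext y; rw [tvalP, Pi.mul_apply]; ring
  rw [← h2] at h1
  refine ⟨_, h1, ?_⟩
  intro j
  simp only [ContinuousLinearMap.coe_smul', Pi.smul_apply, ContinuousLinearMap.add_apply,
    smul_eq_mul, hφv j, hψv j]
  rw [monoP_cons]
  ring

lemma Rep.diff {n k : ℕ} {g : Esp n → ℝ} {B : ℝ} (h : Rep n k g B) :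
    ∀ x : Esp n, x ≠ 0 → DifferentiableAt ℝ g x := by
  induction h with
  | term c l e h₁ h₂ g hg =>
    intro x hx
    obtain ⟨χ, hχ, _⟩ := hasFDeriv_tvalP c l e x hx
    have hev : g =ᶠ[nhds x] tvalP c l e :=
      Filter.eventually_of_mem ((isOpen_compl_singleton).mem_nhds hx)
        (fun y hy => hg y hy)
    exact (Filter.EventuallyEq.differentiableAt_iff hev).2 hχ.differentiableAt
  | add hg hh ihg ihh => exact fun x hx => (ihg x hx).add (ihh x hx)
  | up hgB hBB ih => exact ih
  | congr hrep heq ih =>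
    intro x hx
    have hev : _ =ᶠ[nhds x] _ :=
      Filter.eventually_of_mem ((isOpen_compl_singleton).mem_nhds hx)
        (fun y hy => heq y hy)
    exact (Filter.EventuallyEq.differentiableAt_iff hev.symm).2 (ih x hx)

lemma rep_dsum {n : ℕ} :
    ∀ (l u : List (Fin n)) (c : ℝ) (e : ℤ) (k : ℕ) (j : Fin n),
      ((u.length : ℤ) + l.length + e = 2 - (n : ℤ) - k) →
      ((u.length : ℤ) + l.length ≤ (k : ℤ) + 2) →
      Rep n (k + 1) (fun x => c * (monoP u x * dsumP j l x) * nuP e x)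
        (|c| * l.length) := by
  intro l
  induction l with
  | nil =>
    intro u c e k j hA hB
    have h0 := Rep.term (n := n) (k := k + 1) 0 [] (2 - (n : ℤ) - (k + 1))
      (by simp) (by positivity)
      (fun x => c * (monoP u x * dsumP j [] x) * nuP e x)
      (fun x hx => by simp [dsumP, tvalP])
    exact h0.up (by simp)
  | cons i l ih =>
    intro u c e k j hA hB
    have hfirst : Rep n (k + 1)
        (fun x : Esp n => tvalP (if i = j then c else 0) (u ++ l) e x)
        |if i = j then c else 0| :=
      Rep.term _ _ _
        (by push_cast [List.length_append, List.length_cons, List.length_nil] at hA ⊢; omega)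
        (by push_cast [List.length_append, List.length_cons, List.length_nil] at hB ⊢; omega)
        _ (fun x hx => rfl)
    have hsecond := ih (u ++ [i]) c e k j
      (by push_cast [List.length_append, List.length_cons, List.length_nil] at hA ⊢; omega)
      (by push_cast [List.length_append, List.length_cons, List.length_nil] at hB ⊢; omega)
    have hadd := hfirst.add hsecond
    have hcg : Rep n (k + 1)
        (fun x => c * (monoP u x * dsumP j (i :: l) x) * nuP e x)
        (|if i = j then c else 0| + |c| * l.length) := by
      refine hadd.congr (fun x hx => ?_)
      simp only [dsumP, tvalP]
      rw [monoP_append, monoP_append]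
      have hmi : monoP [i] x = x i := by simp [monoP]
      rw [hmi]
      split_ifs <;> ring
    refine hcg.up ?_
    have hlc : ((i :: l).length : ℝ) = (l.length : ℝ) + 1 := by
      push_cast [List.length_cons]; ring
    rw [hlc]
    have hc0 : (0:ℝ) ≤ |c| := abs_nonneg c
    have hl0 : (0:ℝ) ≤ (l.length : ℝ) := Nat.cast_nonneg _
    split_ifs <;> simp <;> nlinarith

lemma rep_deriv {n : ℕ} (hn : 2 ≤ n) {k : ℕ} {g : Esp n → ℝ} {B : ℝ}
    (h : Rep n k g B) (j : Fin n) :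
    Rep n (k + 1) (pderivE j g) (((n : ℝ) + 3 * k) * B) := by
  induction h with
  | term c l e h₁ h₂ g hg =>
    have hd := rep_dsum l [] c e k j (by simpa using h₁) (by simp; omega)
    have ht : Rep n (k + 1)
        (fun x : Esp n => tvalP (c * (e : ℝ)) (j :: l) (e - 2) x) |c * (e : ℝ)| :=
      Rep.term _ _ _ (by push_cast [List.length_cons]; omega)
        (by push_cast [List.length_cons]; omega) _ (fun x hx => rfl)
    have hadd := hd.add ht
    have hcg : Rep n (k + 1) (pderivE j g) (|c| * l.length + |c * (e : ℝ)|) := by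
      refine hadd.congr (fun x hx => ?_)
      have hev : g =ᶠ[nhds x] tvalP c l e :=
        Filter.eventually_of_mem ((isOpen_compl_singleton).mem_nhds hx)
          (fun y hy => hg y hy)
      obtain ⟨χ, hχ, hval⟩ := hasFDeriv_tvalP c l e x hx
      have : pderivE j g x = χ (EuclideanSpace.single j 1) := by
        rw [pderivE, hev.fderiv_eq, hχ.fderiv]
      rw [this, hval j]
      simp only [tvalP, monoP_nil]
      ring
    refine hcg.up ?_
    have hll : (l.length : ℝ) ≤ (k : ℝ) := by exact_mod_cast h₂
    have heabs : |(e : ℝ)| ≤ (n : ℝ) + 2 * k := by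
      have h1 : |e| ≤ (n : ℤ) + 2 * k := abs_le.mpr ⟨by omega, by omega⟩
      calc |(e : ℝ)| = ((|e| : ℤ) : ℝ) := by rw [Int.cast_abs]
        _ ≤ (((n : ℤ) + 2 * k : ℤ) : ℝ) := by exact_mod_cast h1
        _ = (n : ℝ) + 2 * k := by push_cast; ring
    rw [abs_mul]
    have hc0 : (0:ℝ) ≤ |c| := abs_nonneg c
    have hl0 : (0:ℝ) ≤ (l.length : ℝ) := Nat.cast_nonneg _
    have he0 : (0:ℝ) ≤ |(e : ℝ)| := abs_nonneg _
    nlinarith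
  | add hg hh ihg ihh =>
    rename_i g' h' B' C'
    have hsum := ihg.add ihh
    have hcg : Rep n (k + 1) (pderivE j (fun x => g' x + h' x))
        (((n : ℝ) + 3 * k) * B' + ((n : ℝ) + 3 * k) * C') := by
      refine hsum.congr (fun x hx => ?_)
      rw [pderivE, pderivE, pderivE,
        show (fun x : Esp n => g' x + h' x) = g' + h' from rfl,
        fderiv_add (hg.diff x hx) (hh.diff x hx)]
      simp
    exact hcg.up (le_of_eq (by ring))
  | up hgB hBB ih =>
    have hpos : (0:ℝ) ≤ (n : ℝ) + 3 * k := by positivity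
    exact ih.up (mul_le_mul_of_nonneg_left hBB hpos)
  | congr hrep heq ih =>
    refine ih.congr (fun x hx => ?_)
    rw [pderivE, pderivE]
    have hev : _ =ᶠ[nhds x] _ :=
      Filter.eventually_of_mem ((isOpen_compl_singleton).mem_nhds hx)
        (fun y hy => heq y hy)
    rw [hev.fderiv_eq]

def chainA {n : ℕ} : List (Fin n) → (Esp n → ℝ) → Esp n → ℝ
  | [], f => f
  | j :: L, f => pderivE j (chainA L f)

lemma chainA_append {n : ℕ} (L₁ L₂ : List (Fin n)) (f : Esp n → ℝ) :
    chainA (L₁ ++ L₂) f = chainA L₁ (chainA L₂ f) := by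
  induction L₁ with
  | nil => rfl
  | cons a L₁ ih => simp [chainA, ih]

lemma chainA_replicate {n : ℕ} (m : ℕ) (i : Fin n) (f : Esp n → ℝ) :
    chainA (List.replicate m i) f = (pderivE i)^[m] f := by
  induction m with
  | zero => rfl
  | succ m ih =>
    rw [List.replicate_succ, Function.iterate_succ_apply']
    show pderivE i (chainA (List.replicate m i) f) = _
    rw [ih]

lemma foldr_eq_chainA {n : ℕ} (η : Fin n → ℕ) (f : Esp n → ℝ) :
    ∀ ls : List (Fin n),
      ((ls.map fun i => (pderivE i)^[η i]).foldr (fun g h => g ∘ h) id) f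
        = chainA (ls.flatMap fun i => List.replicate (η i) i) f := by
  intro ls
  induction ls with
  | nil => rfl
  | cons a ls ih =>
    simp only [List.map_cons, List.foldr_cons, List.flatMap_cons, Function.comp_apply]
    rw [chainA_append, ← ih, chainA_replicate]

lemma chain_bound {n : ℕ} (hn : 2 ≤ n) (β : ℝ) (hβ : 0 ≤ β) :
    ∀ (L : List (Fin n)) (k : ℕ) (g : Esp n → ℝ),
      Rep n k g (β * ((n : ℝ) + 3) ^ k * (Nat.factorial k : ℝ)) →
      Rep n (k + L.length) (chainA L g)
        (β * ((n : ℝ) + 3) ^ (k + L.length) * (Nat.factorial (k + L.length) : ℝ)) := by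
  intro L
  induction L with
  | nil => intro k g h; simpa [chainA] using h
  | cons j L ih =>
    intro k g hg
    have h1 := rep_deriv hn (ih k g hg) j
    have hidx : k + (j :: L).length = (k + L.length) + 1 := by
      simp [List.length_cons]; omega
    rw [hidx]
    show Rep n ((k + L.length) + 1) (pderivE j (chainA L g)) _
    refine h1.up ?_
    set m := k + L.length with hm
    have hfac : (Nat.factorial (m + 1) : ℝ) = ((m : ℝ) + 1) * (Nat.factorial m : ℝ) := by
      rw [Nat.factorial_succ]; push_cast; ring
    rw [hfac, pow_succ]
    have hx1 : (n : ℝ) + 3 * m ≤ ((n : ℝ) + 3) * ((m : ℝ) + 1) := by nlinarith [Nat.cast_nonneg (α := ℝ) n, Nat.cast_nonneg (α := ℝ) m]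
    have hx2 : (0:ℝ) ≤ β * ((n : ℝ) + 3) ^ m * (Nat.factorial m : ℝ) := by positivity
    calc ((n : ℝ) + 3 * m) * (β * ((n : ℝ) + 3) ^ m * (Nat.factorial m : ℝ))
        ≤ (((n : ℝ) + 3) * ((m : ℝ) + 1)) * (β * ((n : ℝ) + 3) ^ m * (Nat.factorial m : ℝ)) :=
          mul_le_mul_of_nonneg_right hx1 hx2
      _ = β * (((n : ℝ) + 3) ^ m * ((n : ℝ) + 3)) * (((m : ℝ) + 1) * (Nat.factorial m : ℝ)) := by
          ring

end FSAux


namespace FSAux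

lemma rep_base {n : ℕ} (hn : 2 ≤ n) :
    ∃ b : ℝ, 0 ≤ b ∧ ∀ j : Fin n, Rep n 1 (pderivE j (fundSol n)) b := by
  rcases eq_or_lt_of_le hn with h2 | h3
  · -- n = 2
    subst h2
    refine ⟨|1 / (2 * Real.pi)|, abs_nonneg _, fun j => ?_⟩
    refine Rep.term (1 / (2 * Real.pi)) [j] (-2) (by norm_num) (by norm_num)
      (pderivE j (fundSol 2)) ?_
    intro x hx
    obtain ⟨ψ, hψ, hval⟩ := hasFDeriv_norm x hx
    have hne : ‖x‖ ≠ 0 := norm_ne_zero_iff.2 hx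
    have hlog := HasDerivAt.comp_hasFDerivAt (f := fun y : Esp 2 => ‖y‖) x
      (Real.hasDerivAt_log hne) hψ
    have hfs : fundSol 2 = fun y : Esp 2 => (1 / (2 * Real.pi)) * Real.log ‖y‖ := by
      funext y; simp [fundSol]
    have hc := hlog.const_mul (1 / (2 * Real.pi))
    have hcc : HasFDerivAt (fundSol 2) ((1 / (2 * Real.pi)) • (‖x‖⁻¹ • ψ)) x := by
      rw [hfs]
      exact hc
    rw [pderivE, hcc.fderiv]
    simp only [ContinuousLinearMap.coe_smul', Pi.smul_apply, smul_eq_mul, hval j]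
    simp only [tvalP, monoP_cons, monoP_nil, nuP]
    have hz : ‖x‖ ^ (-2 : ℤ) = (‖x‖ * ‖x‖)⁻¹ := by
      rw [zpow_neg]
      congr 1
      rw [show (2:ℤ) = ((2:ℕ):ℤ) from rfl, zpow_natCast, sq]
    rw [hz]
    field_simp
  · -- 3 ≤ n
    have hne2 : n ≠ 2 := by omega
    set C : ℝ := 1 / (((2 : ℝ) - n) * sphereArea n) with hC
    have h0 : Rep n 0 (fundSol n) |C| := by
      refine Rep.term C [] (2 - (n : ℤ)) (by simp) (by norm_num) _ ?_
      intro x hx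
      simp only [fundSol, if_neg hne2, tvalP, monoP_nil, nuP]
      have hr : ‖x‖ ^ ((2:ℝ) - (n:ℝ)) = ‖x‖ ^ ((2 : ℤ) - (n:ℤ)) := by
        rw [show ((2:ℝ) - (n:ℝ)) = (((2 - (n:ℤ)) : ℤ) : ℝ) by push_cast; ring,
          Real.rpow_intCast]
      rw [hr, div_eq_mul_inv, hC, one_div]
      ring
    refine ⟨((n : ℝ) + 3 * (0 : ℕ)) * |C|, by positivity, fun j => ?_⟩
    exact rep_deriv hn h0 j

end FSAux

/-- homogeneity-type bounds for all partial derivatives of the fundamental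
solution of the Laplace operator. -/
theorem fundSol_deriv_bound
    (n : ℕ) (hn : 2 ≤ n) :
    ∃ ς : ℝ, 0 < ς ∧
      ∀ η : Fin n → ℕ, η ≠ 0 →
      ∀ ξ : EuclideanSpace ℝ (Fin n), ξ ≠ 0 →
        ‖ξ‖ ^ ((∑ i, η i) + n - 2) * |mderiv η (fundSol n) ξ| ≤
          ς ^ (∑ i, η i) * (Nat.factorial (∑ i, η i) : ℝ) := by
  classical
  obtain ⟨b, hb0, hb⟩ := FSAux.rep_base hn
  refine ⟨(b + 1) * ((n : ℝ) + 3), by positivity, ?_⟩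
  intro η hη ξ hξ
  set k := ∑ i, η i with hk
  have hk1 : 1 ≤ k := by
    rcases Function.ne_iff.1 hη with ⟨i, hi⟩
    have hpos : 0 < η i := Nat.pos_of_ne_zero (by simpa using hi)
    calc 1 ≤ η i := hpos
      _ ≤ k := Finset.single_le_sum (f := η) (fun _ _ => Nat.zero_le _) (Finset.mem_univ i)
  set L : List (Fin n) := (List.finRange n).flatMap fun i => List.replicate (η i) i with hL
  have hlen : L.length = k := by
    rw [hL, List.length_flatMap]
    have h : (fun i : Fin n => (List.replicate (η i) i).length) = η := by
      funext i; simp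
    rw [h, ← List.ofFn_eq_map, List.sum_ofFn]
  have hmd : mderiv η (fundSol n) = FSAux.chainA L (fundSol n) := by
    rw [mderiv, List.ofFn_eq_map]
    exact FSAux.foldr_eq_chainA η (fundSol n) (List.finRange n)
  have hLne : L ≠ [] := by
    have hpos : 0 < L.length := by omega
    exact List.ne_nil_of_length_pos hpos
  obtain ⟨L', j, hL'⟩ := L.eq_nil_or_concat'.resolve_left hLne
  have hbase : FSAux.Rep n 1 (pderivE j (fundSol n))
      ((b + 1) * ((n : ℝ) + 3) ^ 1 * (Nat.factorial 1 : ℝ)) := by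
    refine (hb j).up ?_
    simp [Nat.factorial]
    nlinarith [Nat.cast_nonneg (α := ℝ) n]
  have hchain := FSAux.chain_bound hn (b + 1) (by linarith) L' 1 _ hbase
  have hkk : 1 + L'.length = k := by
    have h1 := hlen
    rw [hL'] at h1
    simp [List.length_append] at h1
    omega
  rw [hkk] at hchain
  have hfun : FSAux.chainA L (fundSol n) = FSAux.chainA L' (pderivE j (fundSol n)) := by
    rw [hL', FSAux.chainA_append]
    rfl
  have hbd := hchain.bound ξ hξ
  rw [hmd, hfun]
  have hnorm : (0:ℝ) < ‖ξ‖ := norm_pos_iff.2 hξ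
  set B : ℝ := (b + 1) * ((n : ℝ) + 3) ^ k * (Nat.factorial k : ℝ) with hB
  have key : ‖ξ‖ ^ (k + n - 2) * |FSAux.chainA L' (pderivE j (fundSol n)) ξ| ≤ B := by
    have hpow : (‖ξ‖ : ℝ) ^ (k + n - 2) = ‖ξ‖ ^ ((k : ℤ) + n - 2) := by
      rw [← zpow_natCast]
      congr 1
      omega
    have hstep : ‖ξ‖ ^ (k + n - 2) * |FSAux.chainA L' (pderivE j (fundSol n)) ξ|
        ≤ ‖ξ‖ ^ ((k : ℤ) + n - 2) * (B * ‖ξ‖ ^ (2 - (n : ℤ) - k)) := by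
      rw [hpow]
      exact mul_le_mul_of_nonneg_left hbd (by positivity)
    refine hstep.trans (le_of_eq ?_)
    rw [mul_comm, mul_assoc, ← zpow_add₀ hnorm.ne']
    have hz : (2 - (n : ℤ) - k) + ((k : ℤ) + n - 2) = 0 := by ring
    rw [hz, zpow_zero, mul_one]
  refine key.trans ?_
  rw [mul_pow]
  have h1 : b + 1 ≤ (b + 1) ^ k := le_self_pow₀ (by linarith) (by omega)
  have h2 : (0:ℝ) ≤ ((n : ℝ) + 3) ^ k * (Nat.factorial k : ℝ) := by positivity
  calc B = (b + 1) * (((n : ℝ) + 3) ^ k * (Nat.factorial k : ℝ)) := by rw [hB]; ring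
    _ ≤ (b + 1) ^ k * (((n : ℝ) + 3) ^ k * (Nat.factorial k : ℝ)) :=
        mul_le_mul_of_nonneg_right h1 h2
    _ = (b + 1) ^ k * ((n : ℝ) + 3) ^ k * (Nat.factorial k : ℝ) := by ring
end
end
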